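/- Let E ⊆ ℝⁿ and F ⊆ ℝᵐ be closed sets, and let P : ℝⁿ → ℝᵐ and Q : ℝᵐ → ℝⁿ be maps whose components are real polynomials, such that P(E) = F, Q(F) = E, Q(P(x)) = x for every x ∈ E, and P(Q(y)) = y for every y ∈ F. Then the assignment sending the restriction f|_F (for f ∈ S(ℝᵐ)) to the restriction (f∘P)|_E is a well-defined linear bijection from the set { f|_F : f ∈ S(ℝᵐ) } of restrictions to F of Schwartz functions onto the set { g|_E : g ∈ S(ℝⁿ) } of restrictions to E of Schwartz functions, with inverse sending g|_E to (g∘Q)|_F. -/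

import Mathlib

/-- A map `ℝⁿ → ℝᵐ` all of whose components are real polynomials. -/
def IsPolyMap {n m : ℕ} (P : EuclideanSpace ℝ (Fin n) → EuclideanSpace ℝ (Fin m)) : Prop :=
  ∃ p : Fin m → MvPolynomial (Fin n) ℝ,
    ∀ (x : EuclideanSpace ℝ (Fin n)) (i : Fin m), P x i = MvPolynomial.eval (fun j => x j) (p i)

open Function
open scoped ContDiff

variable {E F G : Type*} [NormedAddCommGroup E] [NormedSpace ℝ E]
  [NormedAddCommGroup F] [NormedSpace ℝ F] [NormedAddCommGroup G] [NormedSpace ℝ G]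

lemma tg_add {f g : E → F} (hf : HasTemperateGrowth f) (hg : HasTemperateGrowth g) :
    HasTemperateGrowth (fun x => f x + g x) := by
  refine ⟨hf.1.add hg.1, fun n => ?_⟩
  obtain ⟨k₁, C₁, hC₁, h₁⟩ := hf.norm_iteratedFDeriv_le_uniform n
  obtain ⟨k₂, C₂, hC₂, h₂⟩ := hg.norm_iteratedFDeriv_le_uniform n
  refine ⟨max k₁ k₂, C₁ + C₂, fun x => ?_⟩
  have hb : (1:ℝ) ≤ 1 + ‖x‖ := by simp [norm_nonneg]
  have e : iteratedFDeriv ℝ n (fun x => f x + g x) x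
      = iteratedFDeriv ℝ n f x + iteratedFDeriv ℝ n g x :=
    iteratedFDeriv_add_apply (hf.1.contDiffAt.of_le (by exact_mod_cast le_top))
      (hg.1.contDiffAt.of_le (by exact_mod_cast le_top))
  calc ‖iteratedFDeriv ℝ n (fun x => f x + g x) x‖
      ≤ ‖iteratedFDeriv ℝ n f x‖ + ‖iteratedFDeriv ℝ n g x‖ := by rw [e]; exact norm_add_le _ _
    _ ≤ C₁ * (1 + ‖x‖) ^ k₁ + C₂ * (1 + ‖x‖) ^ k₂ := add_le_add (h₁ n le_rfl x) (h₂ n le_rfl x)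
    _ ≤ (C₁ + C₂) * (1 + ‖x‖) ^ max k₁ k₂ := by
        rw [add_mul]
        exact add_le_add
          (mul_le_mul_of_nonneg_left (pow_le_pow_right₀ hb (le_max_left _ _)) hC₁)
          (mul_le_mul_of_nonneg_left (pow_le_pow_right₀ hb (le_max_right _ _)) hC₂)

lemma tg_clm_comp (B : F →L[ℝ] G) {f : E → F} (hf : HasTemperateGrowth f) :
    HasTemperateGrowth (fun x => B (f x)) := by
  refine ⟨B.contDiff.comp hf.1, fun n => ?_⟩
  obtain ⟨k, C, hC, h⟩ := hf.norm_iteratedFDeriv_le_uniform n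
  refine ⟨k, ‖B‖ * C, fun x => ?_⟩
  have e : iteratedFDeriv ℝ n (⇑B ∘ f) x
      = B.compContinuousMultilinearMap (iteratedFDeriv ℝ n f x) :=
    B.iteratedFDeriv_comp_left hf.1.contDiffAt (by exact_mod_cast le_top)
  calc ‖iteratedFDeriv ℝ n (fun x => B (f x)) x‖
      = ‖B.compContinuousMultilinearMap (iteratedFDeriv ℝ n f x)‖ := by
        rw [← e]; rfl
    _ ≤ ‖B‖ * ‖iteratedFDeriv ℝ n f x‖ := B.norm_compContinuousMultilinearMap_le _
    _ ≤ ‖B‖ * (C * (1 + ‖x‖) ^ k) := by gcongr; exact h n le_rfl x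
    _ = ‖B‖ * C * (1 + ‖x‖) ^ k := by ring

lemma tg_mul {f g : E → ℝ} (hf : HasTemperateGrowth f) (hg : HasTemperateGrowth g) :
    HasTemperateGrowth (fun x => f x * g x) := by
  refine ⟨hf.1.mul hg.1, fun n => ?_⟩
  obtain ⟨k₁, C₁, hC₁, h₁⟩ := hf.norm_iteratedFDeriv_le_uniform n
  obtain ⟨k₂, C₂, hC₂, h₂⟩ := hg.norm_iteratedFDeriv_le_uniform n
  refine ⟨k₁ + k₂, 2 ^ n * (C₁ * C₂), fun x => ?_⟩
  have hb : (1:ℝ) ≤ 1 + ‖x‖ := by simp [norm_nonneg]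
  calc ‖iteratedFDeriv ℝ n (fun x => f x * g x) x‖
      ≤ ∑ i ∈ Finset.range (n + 1),
          (n.choose i : ℝ) * ‖iteratedFDeriv ℝ i f x‖ * ‖iteratedFDeriv ℝ (n - i) g x‖ :=
        norm_iteratedFDeriv_mul_le hf.1 hg.1 x (by exact_mod_cast le_top)
    _ ≤ ∑ i ∈ Finset.range (n + 1),
          (n.choose i : ℝ) * (C₁ * C₂ * (1 + ‖x‖) ^ (k₁ + k₂)) := by
        refine Finset.sum_le_sum fun i hi => ?_
        rw [Finset.mem_range] at hi
        have := mul_le_mul (h₁ i (by omega) x) (h₂ (n - i) (by omega) x)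
          (norm_nonneg _) (by positivity)
        rw [mul_assoc]
        refine mul_le_mul_of_nonneg_left (this.trans (le_of_eq ?_)) (by positivity)
        rw [pow_add]; ring
    _ = (∑ i ∈ Finset.range (n + 1), (n.choose i : ℝ)) * (C₁ * C₂ * (1 + ‖x‖) ^ (k₁ + k₂)) := by
        rw [Finset.sum_mul]
    _ ≤ 2 ^ n * (C₁ * C₂) * (1 + ‖x‖) ^ (k₁ + k₂) := by
        rw [mul_assoc]
        have : (∑ i ∈ Finset.range (n + 1), (n.choose i : ℝ)) = 2 ^ n := by
          exact_mod_cast congrArg (Nat.cast : ℕ → ℝ) (Nat.sum_range_choose n)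
        rw [this]; ring_nf; rfl

lemma tg_prodMk {f : E → F} {g : E → G} (hf : HasTemperateGrowth f)
    (hg : HasTemperateGrowth g) : HasTemperateGrowth (fun x => (f x, g x)) := by
  have h1 := tg_clm_comp (ContinuousLinearMap.inl ℝ F G) hf
  have h2 := tg_clm_comp (ContinuousLinearMap.inr ℝ F G) hg
  have := tg_add h1 h2
  simpa using this

lemma tg_sub {f g : E → F} (hf : HasTemperateGrowth f) (hg : HasTemperateGrowth g) :
    HasTemperateGrowth (fun x => f x - g x) := by
  have hneg := tg_clm_comp (-(ContinuousLinearMap.id ℝ F)) hg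
  have := tg_add hf hneg
  simpa [sub_eq_add_neg] using this

lemma tg_sum {ι : Type*} (s : Finset ι) (f : ι → E → F)
    (hf : ∀ i ∈ s, HasTemperateGrowth (f i)) :
    HasTemperateGrowth (fun x => ∑ i ∈ s, f i x) := by
  classical
  induction s using Finset.induction with
  | empty => simpa using Function.HasTemperateGrowth.zero
  | insert _ _ hni ih =>
    rename_i a s
    simp only [Finset.sum_insert hni]
    exact tg_add (hf a (Finset.mem_insert_self a s))
      (ih fun i hi => hf i (Finset.mem_insert_of_mem hi))



lemma tg_poly {n : ℕ} (p : MvPolynomial (Fin n) ℝ) :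
    HasTemperateGrowth (fun x : EuclideanSpace ℝ (Fin n) =>
      MvPolynomial.eval (fun j => x j) p) := by
  induction p using MvPolynomial.induction_on with
  | C a => simpa using Function.HasTemperateGrowth.const a
  | add p q hp hq => simpa [MvPolynomial.eval_add] using tg_add hp hq
  | mul_X p j hp =>
    have hXj : HasTemperateGrowth (fun x : EuclideanSpace ℝ (Fin n) => x j) :=
      (EuclideanSpace.proj j : EuclideanSpace ℝ (Fin n) →L[ℝ] ℝ).hasTemperateGrowth
    simpa [MvPolynomial.eval_mul] using tg_mul hp hXj

noncomputable def singleCLM {ι : Type*} [Fintype ι] [DecidableEq ι] (i : ι) :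
    ℝ →L[ℝ] (ι → ℝ) :=
  { LinearMap.single ℝ (fun _ : ι => ℝ) i with
    cont := continuous_pi fun j => by
      simp only [LinearMap.single, LinearMap.coe_mk, AddHom.coe_mk]
      by_cases h : j = i
      · subst h; simpa [Pi.single_apply] using continuous_id'
      · simpa [Pi.single_apply, h] using continuous_const }

@[simp] lemma singleCLM_apply {ι : Type*} [Fintype ι] [DecidableEq ι] (i : ι) (c : ℝ) (j : ι) :
    singleCLM i c j = if j = i then c else 0 := by
  show Pi.single (M := fun _ : ι => ℝ) i c j = _
  simp [Pi.single_apply]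

lemma tg_pi {ι : Type*} [Fintype ι] [DecidableEq ι] {g : ι → E → ℝ}
    (hg : ∀ i, HasTemperateGrowth (g i)) :
    HasTemperateGrowth (fun x (i : ι) => g i x) := by
  have : (fun x (i : ι) => g i x)
      = fun x => ∑ i : ι, singleCLM i (g i x) := by
    funext x
    ext j
    rw [Finset.sum_apply]
    simp
  rw [this]
  exact tg_sum Finset.univ _ fun i _ => tg_clm_comp _ (hg i)

lemma IsPolyMap.hasTemperateGrowth {n m : ℕ}
    {P : EuclideanSpace ℝ (Fin n) → EuclideanSpace ℝ (Fin m)} (hP : IsPolyMap P) :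
    HasTemperateGrowth P := by
  obtain ⟨p, hp⟩ := hP
  have : P = fun x => (EuclideanSpace.equiv (Fin m) ℝ).symm
      (fun i => MvPolynomial.eval (fun j => x j) (p i)) := by
    funext x
    ext i
    exact hp x i
  rw [this]
  exact tg_clm_comp ((EuclideanSpace.equiv (Fin m) ℝ).symm :
      (Fin m → ℝ) →L[ℝ] EuclideanSpace ℝ (Fin m))
    (tg_pi fun i => tg_poly (p i))

lemma aeval_eq_eval' {k : ℕ} (f : Fin k → ℝ) (p : MvPolynomial (Fin k) ℝ) :
    MvPolynomial.aeval f p = MvPolynomial.eval f p := by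
  rw [MvPolynomial.aeval_def, Algebra.algebraMap_self]
  rfl

lemma IsPolyMap.comp {n m l : ℕ} {P : EuclideanSpace ℝ (Fin n) → EuclideanSpace ℝ (Fin m)}
    {Q : EuclideanSpace ℝ (Fin m) → EuclideanSpace ℝ (Fin l)}
    (hQ : IsPolyMap Q) (hP : IsPolyMap P) : IsPolyMap (fun x => Q (P x)) := by
  obtain ⟨p, hp⟩ := hP
  obtain ⟨q, hq⟩ := hQ
  refine ⟨fun i => MvPolynomial.bind₁ p (q i), fun x i => ?_⟩
  simp only []
  rw [hq (P x) i, ← aeval_eq_eval', ← aeval_eq_eval', MvPolynomial.aeval_bind₁]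
  have : (fun j => P x j) = fun i => MvPolynomial.aeval (fun j => x j) (p i) := by
    funext j
    rw [aeval_eq_eval', hp x j]
  rw [this]

lemma IsPolyMap.norm_le {n m : ℕ}
    {P : EuclideanSpace ℝ (Fin n) → EuclideanSpace ℝ (Fin m)} (hP : IsPolyMap P) :
    ∃ (k : ℕ) (C : ℝ), 0 ≤ C ∧ ∀ x, ‖P x‖ ≤ C * (1 + ‖x‖) ^ k := by
  obtain ⟨k, C, hC, h⟩ := hP.hasTemperateGrowth.norm_iteratedFDeriv_le_uniform 0
  exact ⟨k, C, hC, fun x => by simpa [norm_iteratedFDeriv_zero] using h 0 le_rfl x⟩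

open SchwartzMap in
lemma exists_schwartz_prod {V W : Type*} [NormedAddCommGroup V] [NormedSpace ℝ V]
    [NormedAddCommGroup W] [NormedSpace ℝ W] (f : 𝓢(V, ℂ)) (θ : 𝓢(W, ℝ)) :
    ∃ h : 𝓢(V × W, ℂ), ∀ p : V × W, h p = θ p.2 • f p.1 := by
  have hsm : ContDiff ℝ ∞ (fun p : V × W => θ p.2 • f p.1) :=
    ((θ.smooth ⊤).comp contDiff_snd).smul ((f.smooth ⊤).comp contDiff_fst)
  refine ⟨⟨fun p => θ p.2 • f p.1, hsm, ?_⟩, fun p => rfl⟩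
  intro k n
  set Sθ := (Finset.Iic ((k : ℕ), (n : ℕ))).sup (fun m => SchwartzMap.seminorm ℝ m.1 m.2) θ with hSθ
  set Sf := (Finset.Iic ((k : ℕ), (n : ℕ))).sup (fun m => SchwartzMap.seminorm ℝ m.1 m.2) f with hSf
  refine ⟨2 ^ n * ((2 ^ k * Sθ) * (2 ^ k * Sf)), fun x => ?_⟩
  obtain ⟨y, v⟩ := x
  have hθc : ContDiff ℝ (∞ : WithTop ℕ∞) (fun p : V × W => θ p.2) :=
    (θ.smooth ⊤).comp contDiff_snd
  have hfc : ContDiff ℝ (∞ : WithTop ℕ∞) (fun p : V × W => f p.1) :=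
    (f.smooth ⊤).comp contDiff_fst
  -- norm of the point
  have hx : ‖((y, v) : V × W)‖ ^ k ≤ (1 + ‖y‖) ^ k * (1 + ‖v‖) ^ k := by
    rw [← mul_pow]
    refine pow_le_pow_left₀ (norm_nonneg _) ?_ k
    have : ‖((y, v) : V × W)‖ ≤ ‖y‖ + ‖v‖ := by
      rw [Prod.norm_def]
      exact max_le (le_add_of_nonneg_right (norm_nonneg _))
        (le_add_of_nonneg_left (norm_nonneg _))
    refine this.trans ?_
    nlinarith [norm_nonneg y, norm_nonneg v]
  -- derivative bounds for the compositions
  have hθd : ∀ i, ‖iteratedFDeriv ℝ i (fun p : V × W => θ p.2) (y, v)‖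
      ≤ ‖iteratedFDeriv ℝ i (⇑θ) v‖ := by
    intro i
    have e : iteratedFDeriv ℝ i ((⇑θ) ∘ (ContinuousLinearMap.snd ℝ V W)) (y, v)
        = (iteratedFDeriv ℝ i (⇑θ) ((ContinuousLinearMap.snd ℝ V W) (y, v))).compContinuousLinearMap
          (fun _ => ContinuousLinearMap.snd ℝ V W) :=
      (ContinuousLinearMap.snd ℝ V W).iteratedFDeriv_comp_right (θ.smooth ⊤) _
        (by exact_mod_cast le_top)
    have : (fun p : V × W => θ p.2) = (⇑θ) ∘ (ContinuousLinearMap.snd ℝ V W) := rfl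
    rw [this, e]
    refine (ContinuousMultilinearMap.norm_compContinuousLinearMap_le _ _).trans ?_
    have : ∏ _j : Fin i, ‖ContinuousLinearMap.snd ℝ V W‖ ≤ 1 :=
      Finset.prod_le_one (fun _ _ => norm_nonneg _)
        (fun _ _ => ContinuousLinearMap.norm_snd_le ℝ V W)
    calc ‖iteratedFDeriv ℝ i (⇑θ) ((ContinuousLinearMap.snd ℝ V W) (y, v))‖ *
          ∏ _j : Fin i, ‖ContinuousLinearMap.snd ℝ V W‖
        ≤ ‖iteratedFDeriv ℝ i (⇑θ) v‖ * 1 := by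
          exact mul_le_mul_of_nonneg_left this (norm_nonneg _)
      _ = ‖iteratedFDeriv ℝ i (⇑θ) v‖ := mul_one _
  have hfd : ∀ i, ‖iteratedFDeriv ℝ i (fun p : V × W => f p.1) (y, v)‖
      ≤ ‖iteratedFDeriv ℝ i (⇑f) y‖ := by
    intro i
    have e : iteratedFDeriv ℝ i ((⇑f) ∘ (ContinuousLinearMap.fst ℝ V W)) (y, v)
        = (iteratedFDeriv ℝ i (⇑f) ((ContinuousLinearMap.fst ℝ V W) (y, v))).compContinuousLinearMap
          (fun _ => ContinuousLinearMap.fst ℝ V W) :=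
      (ContinuousLinearMap.fst ℝ V W).iteratedFDeriv_comp_right (f.smooth ⊤) _
        (by exact_mod_cast le_top)
    have : (fun p : V × W => f p.1) = (⇑f) ∘ (ContinuousLinearMap.fst ℝ V W) := rfl
    rw [this, e]
    refine (ContinuousMultilinearMap.norm_compContinuousLinearMap_le _ _).trans ?_
    have : ∏ _j : Fin i, ‖ContinuousLinearMap.fst ℝ V W‖ ≤ 1 :=
      Finset.prod_le_one (fun _ _ => norm_nonneg _)
        (fun _ _ => ContinuousLinearMap.norm_fst_le ℝ V W)
    calc ‖iteratedFDeriv ℝ i (⇑f) ((ContinuousLinearMap.fst ℝ V W) (y, v))‖ *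
          ∏ _j : Fin i, ‖ContinuousLinearMap.fst ℝ V W‖
        ≤ ‖iteratedFDeriv ℝ i (⇑f) y‖ * 1 := by
          exact mul_le_mul_of_nonneg_left this (norm_nonneg _)
      _ = ‖iteratedFDeriv ℝ i (⇑f) y‖ := mul_one _
  have hmain : ‖iteratedFDeriv ℝ n (fun p : V × W => θ p.2 • f p.1) (y, v)‖
      ≤ ∑ i ∈ Finset.range (n + 1), (n.choose i : ℝ) *
        ‖iteratedFDeriv ℝ i (fun p : V × W => θ p.2) (y, v)‖ *
        ‖iteratedFDeriv ℝ (n - i) (fun p : V × W => f p.1) (y, v)‖ :=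
    norm_iteratedFDeriv_smul_le hθc hfc (y, v) (by exact_mod_cast le_top)
  calc ‖((y, v) : V × W)‖ ^ k * ‖iteratedFDeriv ℝ n (fun p : V × W => θ p.2 • f p.1) (y, v)‖
      ≤ ((1 + ‖y‖) ^ k * (1 + ‖v‖) ^ k) * ∑ i ∈ Finset.range (n + 1), (n.choose i : ℝ) *
          ‖iteratedFDeriv ℝ i (fun p : V × W => θ p.2) (y, v)‖ *
          ‖iteratedFDeriv ℝ (n - i) (fun p : V × W => f p.1) (y, v)‖ := by
        exact mul_le_mul hx hmain (norm_nonneg _) (by positivity)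
    _ ≤ ∑ i ∈ Finset.range (n + 1), (n.choose i : ℝ) * ((2 ^ k * Sθ) * (2 ^ k * Sf)) := by
        rw [Finset.mul_sum]
        refine Finset.sum_le_sum fun i hi => ?_
        rw [Finset.mem_range] at hi
        have h1 : (1 + ‖v‖) ^ k * ‖iteratedFDeriv ℝ i (⇑θ) v‖ ≤ 2 ^ k * Sθ :=
          one_add_le_sup_seminorm_apply (𝕜 := ℝ) (m := (k, n)) le_rfl (by omega) θ v
        have h2 : (1 + ‖y‖) ^ k * ‖iteratedFDeriv ℝ (n - i) (⇑f) y‖ ≤ 2 ^ k * Sf :=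
          one_add_le_sup_seminorm_apply (𝕜 := ℝ) (m := (k, n)) le_rfl (by omega) f y
        calc (1 + ‖y‖) ^ k * (1 + ‖v‖) ^ k * ((n.choose i : ℝ) *
              ‖iteratedFDeriv ℝ i (fun p : V × W => θ p.2) (y, v)‖ *
              ‖iteratedFDeriv ℝ (n - i) (fun p : V × W => f p.1) (y, v)‖)
            ≤ (1 + ‖y‖) ^ k * (1 + ‖v‖) ^ k * ((n.choose i : ℝ) *
              ‖iteratedFDeriv ℝ i (⇑θ) v‖ * ‖iteratedFDeriv ℝ (n - i) (⇑f) y‖) := by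
              refine mul_le_mul_of_nonneg_left ?_ (by positivity)
              exact mul_le_mul (mul_le_mul_of_nonneg_left (hθd i) (by positivity))
                (hfd (n - i)) (norm_nonneg _) (by positivity)
          _ = (n.choose i : ℝ) * (((1 + ‖v‖) ^ k * ‖iteratedFDeriv ℝ i (⇑θ) v‖) *
              ((1 + ‖y‖) ^ k * ‖iteratedFDeriv ℝ (n - i) (⇑f) y‖)) := by ring
          _ ≤ (n.choose i : ℝ) * ((2 ^ k * Sθ) * (2 ^ k * Sf)) := by
              refine mul_le_mul_of_nonneg_left ?_ (by positivity)
              exact mul_le_mul h1 h2 (by positivity) (by positivity)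
    _ = (∑ i ∈ Finset.range (n + 1), (n.choose i : ℝ)) * ((2 ^ k * Sθ) * (2 ^ k * Sf)) := by
        rw [Finset.sum_mul]
    _ = 2 ^ n * ((2 ^ k * Sθ) * (2 ^ k * Sf)) := by
        congr 1
        exact_mod_cast congrArg (Nat.cast : ℕ → ℝ) (Nat.sum_range_choose n)

lemma exists_schwartz_bump (n : ℕ) :
    ∃ θ : SchwartzMap (EuclideanSpace ℝ (Fin n)) ℝ, θ 0 = 1 := by
  let c : ContDiffBump (0 : EuclideanSpace ℝ (Fin n)) := ⟨1, 2, one_pos, one_lt_two⟩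
  have hsm : ContDiff ℝ ∞ ⇑c := c.contDiff
  have hcs : HasCompactSupport ⇑c := c.hasCompactSupport
  refine ⟨⟨⇑c, hsm, ?_⟩, ?_⟩
  · intro k i
    have hcont : Continuous fun x => ‖x‖ ^ k * ‖iteratedFDeriv ℝ i (⇑c) x‖ := by
      exact ((continuous_norm.pow k).mul (hsm.continuous_iteratedFDeriv
        (by exact_mod_cast le_top)).norm)
    have hcs' : HasCompactSupport fun x => ‖x‖ ^ k * ‖iteratedFDeriv ℝ i (⇑c) x‖ := by
      have := (hcs.iteratedFDeriv (𝕜 := ℝ) i).norm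
      exact this.mul_left
    obtain ⟨C, hC⟩ := hcont.bounded_above_of_compact_support hcs'
    exact ⟨C, fun x => by
      have := hC x
      rwa [Real.norm_eq_abs, abs_of_nonneg (by positivity)] at this⟩
  · exact c.one_of_mem_closedBall (Metric.mem_closedBall_self (by norm_num))

lemma extension_lemma {n m : ℕ} {E : Set (EuclideanSpace ℝ (Fin n))}
    {P : EuclideanSpace ℝ (Fin n) → EuclideanSpace ℝ (Fin m)}
    {Q : EuclideanSpace ℝ (Fin m) → EuclideanSpace ℝ (Fin n)}
    (hP : IsPolyMap P) (hQ : IsPolyMap Q) (hQP : ∀ x ∈ E, Q (P x) = x)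
    (f : SchwartzMap (EuclideanSpace ℝ (Fin m)) ℂ) :
    ∃ g : SchwartzMap (EuclideanSpace ℝ (Fin n)) ℂ, ∀ x ∈ E, g x = f (P x) := by
  obtain ⟨θ, hθ⟩ := exists_schwartz_bump n
  obtain ⟨h, hh⟩ := exists_schwartz_prod f θ
  set T : EuclideanSpace ℝ (Fin n) → EuclideanSpace ℝ (Fin m) × EuclideanSpace ℝ (Fin n) :=
    fun x => (P x, x - Q (P x)) with hTdef
  have hTtg : Function.HasTemperateGrowth T :=
    tg_prodMk hP.hasTemperateGrowth
      (tg_sub (ContinuousLinearMap.id ℝ _).hasTemperateGrowth (hQ.comp hP).hasTemperateGrowth)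
  obtain ⟨k, C, hC, hQle⟩ := hQ.norm_le
  have hupper : ∃ (k : ℕ) (C : ℝ), ∀ x, ‖x‖ ≤ C * (1 + ‖T x‖) ^ k := by
    refine ⟨k + 1, C + 1, fun x => ?_⟩
    have hb : (1:ℝ) ≤ 1 + ‖T x‖ := by simp [norm_nonneg]
    have h2 : ‖P x‖ ≤ ‖T x‖ := norm_fst_le (T x)
    have h3 : ‖x - Q (P x)‖ ≤ ‖T x‖ := norm_snd_le (T x)
    have h1 : ‖x‖ ≤ ‖Q (P x)‖ + ‖x - Q (P x)‖ := by
      calc ‖x‖ = ‖Q (P x) + (x - Q (P x))‖ := by rw [add_sub_cancel]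
        _ ≤ ‖Q (P x)‖ + ‖x - Q (P x)‖ := norm_add_le _ _
    calc ‖x‖ ≤ ‖Q (P x)‖ + ‖x - Q (P x)‖ := h1
      _ ≤ C * (1 + ‖P x‖) ^ k + ‖T x‖ := add_le_add (hQle (P x)) h3
      _ ≤ C * (1 + ‖T x‖) ^ (k + 1) + 1 * (1 + ‖T x‖) ^ (k + 1) := by
          refine add_le_add ?_ ?_
          · refine mul_le_mul_of_nonneg_left ?_ hC
            refine (pow_le_pow_left₀ (by positivity) (by linarith [h2] : (1:ℝ) + ‖P x‖ ≤ 1 + ‖T x‖) k).trans ?_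
            exact pow_le_pow_right₀ hb (by omega)
          · rw [one_mul]
            refine le_trans (by linarith) (le_self_pow₀ hb (by omega))
      _ = (C + 1) * (1 + ‖T x‖) ^ (k + 1) := by ring
  refine ⟨SchwartzMap.compCLM ℝ hTtg hupper h, fun x hx => ?_⟩
  have hgx : (SchwartzMap.compCLM ℝ hTtg hupper h) x = h (T x) := rfl
  rw [hgx, hh (T x)]
  have : (T x).2 = 0 := by simp [hTdef, hQP x hx]
  rw [this, hθ]
  have : (T x).1 = P x := rfl
  rw [this, one_smul]

/-- Let `E ⊆ ℝⁿ`, `F ⊆ ℝᵐ` be closed, and `P, Q` polynomial maps with `P(E) = F`, `Q(F) = E`,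
`Q∘P = id` on `E` and `P∘Q = id` on `F`.  Then the assignment `f|_F ↦ (f∘P)|_E` is a
well-defined linear bijection from the restrictions to `F` of Schwartz functions onto the
restrictions to `E` of Schwartz functions, whose inverse sends `g|_E` to `(g∘Q)|_F`. -/
theorem stmt1 {n m : ℕ} (E : Set (EuclideanSpace ℝ (Fin n))) (F : Set (EuclideanSpace ℝ (Fin m)))
    (hE : IsClosed E) (hF : IsClosed F)
    (P : EuclideanSpace ℝ (Fin n) → EuclideanSpace ℝ (Fin m))
    (Q : EuclideanSpace ℝ (Fin m) → EuclideanSpace ℝ (Fin n))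
    (hP : IsPolyMap P) (hQ : IsPolyMap Q)
    (hPE : P '' E = F) (hQF : Q '' F = E)
    (hQP : ∀ x ∈ E, Q (P x) = x) (hPQ : ∀ y ∈ F, P (Q y) = y) :
    ∃ Φ : (↥F → ℂ) →ₗ[ℂ] (↥E → ℂ),
      (∀ f : SchwartzMap (EuclideanSpace ℝ (Fin m)) ℂ,
        Φ (F.restrict ⇑f) = E.restrict (fun x => f (P x))) ∧
      Set.BijOn Φ
        {u : ↥F → ℂ | ∃ f : SchwartzMap (EuclideanSpace ℝ (Fin m)) ℂ, u = F.restrict ⇑f}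
        {v : ↥E → ℂ | ∃ g : SchwartzMap (EuclideanSpace ℝ (Fin n)) ℂ, v = E.restrict ⇑g} ∧
      (∀ g : SchwartzMap (EuclideanSpace ℝ (Fin n)) ℂ,
        Φ (F.restrict (fun y => g (Q y))) = E.restrict ⇑g) := by
  have hPF : ∀ x : ↥E, P x.1 ∈ F := fun x => hPE ▸ ⟨x.1, x.2, rfl⟩
  refine ⟨{ toFun := fun u x => u ⟨P x.1, hPF x⟩,
            map_add' := fun u v => rfl, map_smul' := fun c u => rfl }, fun f => rfl, ?_, ?_⟩
  · refine ⟨?_, ?_, ?_⟩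
    · rintro u ⟨f, rfl⟩
      obtain ⟨g, hg⟩ := extension_lemma hP hQ hQP f
      exact ⟨g, funext fun x => (hg x.1 x.2).symm⟩
    · rintro u ⟨fu, rfl⟩ v ⟨fv, rfl⟩ heq
      funext y
      obtain ⟨x, hx, hPx⟩ : y.1 ∈ P '' E := hPE.symm ▸ y.2
      have hy : y = ⟨P x, hPF ⟨x, hx⟩⟩ := Subtype.ext hPx.symm
      have := congrFun heq ⟨x, hx⟩
      simpa [hy] using this
    · rintro v ⟨g, rfl⟩
      obtain ⟨f, hf⟩ := extension_lemma hQ hP hPQ g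
      refine ⟨F.restrict ⇑f, ⟨f, rfl⟩, ?_⟩
      funext x
      show f (P x.1) = g x.1
      rw [hf (P x.1) (hPF x), hQP x.1 x.2]
  · intro g
    funext x
    show g (Q (P x.1)) = g x.1
    rw [hQP x.1 x.2]
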